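/- Under the g-FOB model on a rooted phylogenetic X-tree with edge lengths, the variance of future phylogenetic diversity satisfies Var[φ] ≥ Σ_{e : C(e) is a singleton} λ_e² P_e (1 − P_e), i.e., the variance is bounded below by the contribution of the pendant edges. -/

import Mathlib

open MeasureTheory ProbabilityTheory Finset
open scoped Classical

/-- Under the g-FOB model on a rooted phylogenetic tree (encoded by the
distinct clusters `C e` of its edges, forming a laminar family), the variance of future
phylogenetic diversity `φ = ∑ e, lam e * Y e` is bounded below by the contribution of the
pendant edges (the edges whose cluster is a singleton):
`Var[φ] ≥ ∑_{e : |C e| = 1} (lam e)^2 * P e * (1 - P e)`. -/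
theorem variance_future_PD_pendant_lower_bound
    {Ω : Type*} [MeasurableSpace Ω] (μ : Measure Ω) [IsProbabilityMeasure μ]
    {ι : Type*} [Fintype ι]
    (surv : ι → Ω → Bool)
    (hmeas : ∀ i, Measurable (surv i))
    (hindep : iIndepFun surv μ)
    (p : ι → ℝ) (hp01 : ∀ i, p i ∈ Set.Icc (0 : ℝ) 1)
    (hp : ∀ i, (μ {ω | surv i ω = true}).toReal = p i)
    {η : Type*} [Fintype η]
    (C : η → Finset ι) (hC : ∀ e, (C e).Nonempty)
    (hC_distinct : Function.Injective C)
    (hC_laminar : ∀ e f, C e ⊆ C f ∨ C f ⊆ C e ∨ Disjoint (C e) (C f))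
    (lam : η → ℝ) (hlam : ∀ e, 0 ≤ lam e)
    (Y : η → Ω → ℝ)
    (hY : ∀ e ω, Y e ω = if ∃ i ∈ C e, surv i ω = true then 1 else 0)
    (P : η → ℝ) (hP : ∀ e, P e = (μ {ω | Y e ω = 1}).toReal)
    (φ : Ω → ℝ) (hφ : ∀ ω, φ ω = ∑ e, lam e * Y e ω) :
    variance φ μ ≥
      ∑ e ∈ Finset.univ.filter (fun e => (C e).card = 1),
        (lam e) ^ 2 * P e * (1 - P e) := by
  classical
  -- the survival event of each edge
  set A : η → Set Ω := fun e => {ω | ∃ i ∈ C e, surv i ω = true} with hA_def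
  have hA_meas : ∀ e, MeasurableSet (A e) := by
    intro e
    have : A e = ⋃ i ∈ C e, surv i ⁻¹' {true} := by
      ext ω; simp [hA_def]
    rw [this]
    exact MeasurableSet.biUnion (C e : Set ι).to_countable
      fun i _ => (hmeas i) (MeasurableSet.singleton true)
  have hY_ind : ∀ e, Y e = (A e).indicator (fun _ => (1:ℝ)) := by
    intro e; funext ω
    rw [hY]
    by_cases h : ω ∈ A e
    · rw [Set.indicator_of_mem h]; exact if_pos h
    · rw [Set.indicator_of_notMem h]; exact if_neg h
  set q : η → ℝ := fun e => (μ (A e)).toReal with hq_def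
  have hq_nonneg : ∀ e, 0 ≤ q e := fun e => ENNReal.toReal_nonneg
  have hq_le_one : ∀ e, q e ≤ 1 := by
    intro e
    have : μ (A e) ≤ 1 := prob_le_one
    simpa [hq_def] using ENNReal.toReal_mono (by norm_num) this
  -- P e = q e
  have hPq : ∀ e, P e = q e := by
    intro e
    rw [hP]
    congr 1
    congr 1
    ext ω
    rw [Set.mem_setOf_eq, hY]
    by_cases h : ω ∈ A e
    · simp only [if_pos (show ∃ i ∈ C e, surv i ω = true from h)]
      simpa using h
    · simp only [if_neg (show ¬ ∃ i ∈ C e, surv i ω = true from h)]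
      constructor
      · intro h01; exact absurd h01 (by norm_num)
      · intro hh; exact absurd hh h
  -- integrability and expectation of Y e
  have hY_int : ∀ e, Integrable (Y e) μ := by
    intro e
    rw [hY_ind]
    exact (integrable_indicator_iff (hA_meas e)).2
      integrableOn_const
  have hY_exp : ∀ e, ∫ ω, Y e ω ∂μ = q e := by
    intro e
    rw [hY_ind]
    rw [integral_indicator_const (1:ℝ) (hA_meas e)]
    simp [hq_def, Measure.real]
  -- products
  have hYY_ind : ∀ e f, (fun ω => Y e ω * Y f ω) = (A e ∩ A f).indicator (fun _ => (1:ℝ)) := by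
    intro e f; funext ω
    rw [hY_ind, hY_ind]
    by_cases he : ω ∈ A e <;> by_cases hf : ω ∈ A f <;>
      simp [Set.indicator, he, hf]
  have hYY_int : ∀ e f, Integrable (fun ω => Y e ω * Y f ω) μ := by
    intro e f
    rw [hYY_ind]
    exact (integrable_indicator_iff ((hA_meas e).inter (hA_meas f))).2
      integrableOn_const
  set r : η → η → ℝ := fun e f => (μ (A e ∩ A f)).toReal with hr_def
  have hYY_exp : ∀ e f, ∫ ω, Y e ω * Y f ω ∂μ = r e f := by
    intro e f
    rw [hYY_ind, integral_indicator_const (1:ℝ) ((hA_meas e).inter (hA_meas f))]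
    simp [hr_def, Measure.real]
  -- independence for disjoint clusters
  have hA_sub : ∀ {e f}, C e ⊆ C f → A e ⊆ A f := by
    intro e f hef ω hω
    obtain ⟨i, hi, hs⟩ := hω
    exact ⟨i, hef hi, hs⟩
  have hr_indep : ∀ e f, Disjoint (C e) (C f) → r e f = q e * q f := by
    intro e f hdisj
    have hind := hindep.indepFun_finset (C e) (C f) hdisj hmeas
    -- compose with indicator functions
    have hcomp : ∀ (g : η) , Measurable
        (fun v : C g → Bool => if ∃ i : C g, v i = true then (1:ℝ) else 0) :=
      fun g => measurable_of_finite _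
    have hYe : Y e = (fun v : C e → Bool =>
        if ∃ i : C e, v i = true then (1:ℝ) else 0) ∘ (fun ω (i : C e) => surv i ω) := by
      funext ω
      rw [hY]
      simp only [Function.comp_apply]
      congr 1
      simp only [eq_iff_iff]
      constructor
      · rintro ⟨i, hi, hs⟩; exact ⟨⟨i, hi⟩, hs⟩
      · rintro ⟨⟨i, hi⟩, hs⟩; exact ⟨i, hi, hs⟩
    have hYf : Y f = (fun v : C f → Bool =>
        if ∃ i : C f, v i = true then (1:ℝ) else 0) ∘ (fun ω (i : C f) => surv i ω) := by
      funext ω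
      rw [hY]
      simp only [Function.comp_apply]
      congr 1
      simp only [eq_iff_iff]
      constructor
      · rintro ⟨i, hi, hs⟩; exact ⟨⟨i, hi⟩, hs⟩
      · rintro ⟨⟨i, hi⟩, hs⟩; exact ⟨i, hi, hs⟩
    have hindYY : IndepFun (Y e) (Y f) μ := by
      rw [hYe, hYf]
      exact hind.comp (hcomp e) (hcomp f)
    have := hindYY.integral_mul_eq_mul_integral (hY_int e).1 (hY_int f).1
    rw [← hYY_exp e f, ← hY_exp e, ← hY_exp f]
    simpa [Pi.mul_apply] using this
  -- nonnegative covariance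
  have hcov : ∀ e f, q e * q f ≤ r e f := by
    intro e f
    rcases hC_laminar e f with h | h | h
    · have hAA : A e ∩ A f = A e := Set.inter_eq_left.2 (hA_sub h)
      have : r e f = q e := by rw [hr_def]; simp only []; rw [hAA]
      rw [this]
      calc q e * q f ≤ q e * 1 := by
            exact mul_le_mul_of_nonneg_left (hq_le_one f) (hq_nonneg e)
        _ = q e := mul_one _
    · have hAA : A e ∩ A f = A f := Set.inter_eq_right.2 (hA_sub h)
      have : r e f = q f := by rw [hr_def]; simp only []; rw [hAA]
      rw [this]
      calc q e * q f ≤ 1 * q f := by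
            exact mul_le_mul_of_nonneg_right (hq_le_one e) (hq_nonneg f)
        _ = q f := one_mul _
    · rw [hr_indep e f h]
  have hr_diag : ∀ e, r e e = q e := by
    intro e; rw [hr_def, hq_def]; simp
  -- variance computation
  have hφ_eq : φ = fun ω => ∑ e, lam e * Y e ω := funext hφ
  have hφ_mem : MemLp φ 2 μ := by
    rw [hφ_eq]
    apply memLp_finset_sum
    intro e _
    have : MemLp (Y e) 2 μ := by
      rw [hY_ind]
      exact memLp_indicator_const 2 (hA_meas e) 1 (Or.inr (measure_ne_top μ _))
    exact this.const_mul (lam e)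
  have hvar : variance φ μ = ∑ e, ∑ f, lam e * lam f * (r e f - q e * q f) := by
    rw [variance_eq_sub hφ_mem]
    have h1 : μ[φ] = ∑ e, lam e * q e := by
      rw [hφ_eq, integral_finset_sum _ (fun e _ => (hY_int e).const_mul (lam e))]
      exact Finset.sum_congr rfl fun e _ => by
        rw [integral_const_mul, hY_exp]
    have h2 : μ[φ ^ 2] = ∑ e, ∑ f, lam e * lam f * r e f := by
      have hsq : φ ^ 2 = fun ω => ∑ e, ∑ f, lam e * lam f * (Y e ω * Y f ω) := by
        funext ω
        rw [Pi.pow_apply, hφ_eq]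
        rw [sq, Finset.sum_mul_sum]
        exact Finset.sum_congr rfl fun e _ => Finset.sum_congr rfl fun f _ => by ring
      rw [hsq]
      rw [integral_finset_sum _ (fun e _ => integrable_finset_sum _
        (fun f _ => ((hYY_int e f).const_mul (lam e * lam f))))]
      refine Finset.sum_congr rfl fun e _ => ?_
      rw [integral_finset_sum _ (fun f _ => ((hYY_int e f).const_mul (lam e * lam f)))]
      exact Finset.sum_congr rfl fun f _ => by rw [integral_const_mul, hYY_exp]
    rw [h1, h2, sq, Finset.sum_mul_sum]
    rw [← Finset.sum_sub_distrib]
    refine Finset.sum_congr rfl fun e _ => ?_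
    rw [← Finset.sum_sub_distrib]
    exact Finset.sum_congr rfl fun f _ => by ring
  rw [hvar, ge_iff_le]
  have hterm_nonneg : ∀ e f, 0 ≤ lam e * lam f * (r e f - q e * q f) :=
    fun e f => mul_nonneg (mul_nonneg (hlam e) (hlam f)) (sub_nonneg.2 (hcov e f))
  have hdiag_eq : ∑ e ∈ Finset.univ.filter (fun e => (C e).card = 1), lam e ^ 2 * P e * (1 - P e)
      = ∑ e ∈ Finset.univ.filter (fun e => (C e).card = 1), lam e * lam e * (r e e - q e * q e) := by
    refine Finset.sum_congr rfl fun e _ => ?_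
    rw [hPq, hr_diag]
    ring
  rw [hdiag_eq]
  calc ∑ e ∈ Finset.univ.filter (fun e => (C e).card = 1), lam e * lam e * (r e e - q e * q e)
      ≤ ∑ e, lam e * lam e * (r e e - q e * q e) :=
        Finset.sum_le_sum_of_subset_of_nonneg (Finset.filter_subset _ _)
          (fun e _ _ => hterm_nonneg e e)
    _ ≤ ∑ e, ∑ f, lam e * lam f * (r e f - q e * q f) := by
        refine Finset.sum_le_sum fun e _ => ?_
        exact Finset.single_le_sum (fun f _ => hterm_nonneg e f) (Finset.mem_univ e)
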